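/- Let U be a real random variable with distribution F satisfying E[U] = 0, E[U²] = 1, E[U³] = 0 and E[U⁴] < ∞, let τ > 0, and let λ ↦ p(y; λ) be four times continuously differentiable in λ with derivatives dominated near λ₀ by an F-integrable function so that differentiation under the integral sign is justified, and suppose p(y; λ₀) > 0. Define l(η) = log ∫ p(y; λ₀ + τ √η · u) dF(u) for η ≥ 0. Then the second right derivative of l at η = 0 exists, is finite, and equals ∇²_η l |_{η=0} = (τ⁴/12) [ E[U⁴] · ∇⁴_λ p(y; λ₀)/p(y; λ₀) − 3 (E[U²])² ( ∇²_λ p(y; λ₀)/p(y; λ₀) )² ]. -/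

import Mathlib

open MeasureTheory Filter Topology
open scoped BigOperators ENNReal

/-- The family of integrals `ξ ↦ ∫ (τu)^k p^{(k)}(l₀ + τξu) dF(u)`. -/
noncomputable def Gfam (F : Measure ℝ) (τ l₀ : ℝ) (p : ℝ → ℝ) (k : ℕ) (ξ : ℝ) : ℝ :=
  ∫ u, (τ * u) ^ k * iteratedDeriv k p (l₀ + τ * ξ * u) ∂F

lemma Gfam_hasDerivAt (F : Measure ℝ) (τ l₀ : ℝ) (hτ : 0 < τ)
    (p : ℝ → ℝ) (hsmooth : ContDiff ℝ 4 p)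
    (D : ℝ → ℝ) (hD : Integrable D F) (ε : ℝ) (hε : 0 < ε)
    (hdom : ∀ᵐ u ∂F, ∀ ξ : ℝ, |ξ| < ε → ∀ k ≤ 4,
      |u ^ k * iteratedDeriv k p (l₀ + τ * ξ * u)| ≤ D u)
    (k : ℕ) (hk : k < 4) (ξ₀ : ℝ) (hξ₀ : |ξ₀| < ε) :
    HasDerivAt (Gfam F τ l₀ p k) (Gfam F τ l₀ p (k + 1) ξ₀) ξ₀ := by
  have hcont : ∀ j : ℕ, j ≤ 4 → Continuous (iteratedDeriv j p) := fun j hj =>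
    hsmooth.continuous_iteratedDeriv j (by exact_mod_cast hj)
  have hτpow : ∀ j : ℕ, j ≤ 4 → τ ^ j ≤ (1 + τ) ^ 4 := by
    intro j hj
    calc τ ^ j ≤ (1 + τ) ^ j := pow_le_pow_left₀ hτ.le (by linarith) j
    _ ≤ (1 + τ) ^ 4 := pow_le_pow_right₀ (by linarith) hj
  have habs : ∀ (j : ℕ) (x u : ℝ), |(τ * u) ^ j * iteratedDeriv j p (l₀ + τ * x * u)|
      = τ ^ j * |u ^ j * iteratedDeriv j p (l₀ + τ * x * u)| := by
    intro j x u
    rw [mul_pow, mul_assoc, abs_mul, abs_pow, abs_of_pos hτ]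
  have hδpos : 0 < ε - |ξ₀| := by linarith
  have hball : ∀ x ∈ Metric.ball ξ₀ (ε - |ξ₀|), |x| < ε := by
    intro x hx
    have h1 : |x - ξ₀| < ε - |ξ₀| := by simpa [Real.dist_eq] using hx
    calc |x| = |x - ξ₀ + ξ₀| := by ring_nf
    _ ≤ |x - ξ₀| + |ξ₀| := abs_add_le _ _
    _ < ε := by linarith
  have hmeas : ∀ (x : ℝ) (j : ℕ), j ≤ 4 →
      AEStronglyMeasurable (fun u => (τ * u) ^ j * iteratedDeriv j p (l₀ + τ * x * u)) F := by
    intro x j hj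
    exact (((continuous_const.mul continuous_id).pow j).mul ((hcont j hj).comp
      (continuous_const.add (continuous_const.mul continuous_id)))).aestronglyMeasurable
  have key := hasDerivAt_integral_of_dominated_loc_of_deriv_le (μ := F)
    (F := fun x u => (τ * u) ^ k * iteratedDeriv k p (l₀ + τ * x * u))
    (F' := fun x u => (τ * u) ^ (k + 1) * iteratedDeriv (k + 1) p (l₀ + τ * x * u))
    (bound := fun u => (1 + τ) ^ 4 * D u) (Metric.ball_mem_nhds ξ₀ hδpos)
    (Eventually.of_forall fun x => hmeas x k hk.le)
    (by
      refine (hD.const_mul ((1 + τ) ^ 4)).mono' (hmeas ξ₀ k hk.le) ?_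
      filter_upwards [hdom] with u hu
      rw [Real.norm_eq_abs, habs]
      exact mul_le_mul (hτpow k hk.le) (hu ξ₀ hξ₀ k hk.le) (abs_nonneg _)
        (by positivity))
    (hmeas ξ₀ (k + 1) hk)
    (by
      filter_upwards [hdom] with u hu x hx
      rw [Real.norm_eq_abs, habs]
      exact mul_le_mul (hτpow (k + 1) hk) (hu x (hball x hx) (k + 1) hk)
        (abs_nonneg _) (by positivity))
    (hD.const_mul _)
    (by
      refine Eventually.of_forall fun u x hx => ?_
      have hfun : (fun x : ℝ => l₀ + τ * x * u) = fun x => l₀ + (τ * u) * x := by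
        funext x; ring
      have hinner : HasDerivAt (fun x : ℝ => l₀ + τ * x * u) (τ * u) x := by
        rw [hfun]
        simpa using ((hasDerivAt_id x).const_mul (τ * u)).const_add l₀
      have houter : HasDerivAt (iteratedDeriv k p)
          (iteratedDeriv (k + 1) p (l₀ + τ * x * u)) (l₀ + τ * x * u) := by
        rw [iteratedDeriv_succ]
        exact ((hsmooth.differentiable_iteratedDeriv k (by exact_mod_cast hk)) _).hasDerivAt
      have := (houter.comp x hinner).const_mul ((τ * u) ^ k)
      exact this.congr_deriv (by ring))
  exact key.2

lemma Gfam_zero (F : Measure ℝ) (τ l₀ : ℝ) (p : ℝ → ℝ) (k : ℕ) :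
    Gfam F τ l₀ p k 0 = τ ^ k * iteratedDeriv k p l₀ * ∫ u, u ^ k ∂F := by
  unfold Gfam
  have h : ∀ u : ℝ, (τ * u) ^ k * iteratedDeriv k p (l₀ + τ * 0 * u)
      = (τ ^ k * iteratedDeriv k p l₀) * u ^ k := by
    intro u; rw [mul_pow]; ring_nf
  simp_rw [h]
  rw [MeasureTheory.integral_const_mul]

/-- For the reparameterized mixture log-density
`l(η) = log ∫ p(y; l₀ + τ√η u) dF(u)`, `η ≥ 0`, with `E[U] = 0`, `E[U²] = 1`, `E[U³] = 0`
and `E[U⁴] < ∞`, the second right derivative of `l` at `η = 0` exists, is finite, and equals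
`(τ⁴/12)[E[U⁴] ∇⁴_λ p/p − 3 (E[U²])² (∇²_λ p/p)²]` evaluated at `l₀`. -/
theorem reparameterized_second_right_derivative
    (F : Measure ℝ) [IsProbabilityMeasure F]
    (hU1 : ∫ u, u ∂F = 0) (hU2 : ∫ u, u ^ 2 ∂F = 1)
    (hU3 : ∫ u, u ^ 3 ∂F = 0) (hU4 : Integrable (fun u => u ^ 4) F)
    (τ : ℝ) (hτ : 0 < τ) (l₀ : ℝ)
    (p : ℝ → ℝ)
    (hsmooth : ContDiff ℝ 4 p)
    -- domination justifying differentiation under the integral sign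
    (D : ℝ → ℝ) (hD : Integrable D F) (ε : ℝ) (hε : 0 < ε)
    (hdom : ∀ᵐ u ∂F, ∀ ξ : ℝ, |ξ| < ε → ∀ k ≤ 4,
      |u ^ k * iteratedDeriv k p (l₀ + τ * ξ * u)| ≤ D u)
    (hpos : 0 < p l₀) :
    HasDerivWithinAt
      (fun η : ℝ => derivWithin
        (fun η' : ℝ => Real.log (∫ u, p (l₀ + τ * Real.sqrt η' * u) ∂F)) (Set.Ici 0) η)
      ((τ ^ 4 / 12) * ((∫ u, u ^ 4 ∂F) * (iteratedDeriv 4 p l₀ / p l₀)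
        - 3 * (∫ u, u ^ 2 ∂F) ^ 2 * (iteratedDeriv 2 p l₀ / p l₀) ^ 2))
      (Set.Ici 0) 0 := by
  classical
  set l : ℝ → ℝ := fun η' : ℝ => Real.log (∫ u, p (l₀ + τ * Real.sqrt η' * u) ∂F) with hldef
  set G : ℕ → ℝ → ℝ := Gfam F τ l₀ p with hGdef
  have hkey : ∀ k, k < 4 → ∀ ξ : ℝ, |ξ| < ε → HasDerivAt (G k) (G (k + 1) ξ) ξ :=
    fun k hk ξ hξ => Gfam_hasDerivAt F τ l₀ hτ p hsmooth D hD ε hε hdom k hk ξ hξ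
  have hzero : ∀ k : ℕ, G k 0 = τ ^ k * iteratedDeriv k p l₀ * ∫ u, u ^ k ∂F :=
    fun k => Gfam_zero F τ l₀ p k
  have hleq : ∀ η : ℝ, l η = Real.log (G 0 (Real.sqrt η)) := by
    intro η
    simp [hldef, hGdef, Gfam]
  set a := p l₀ with hadef
  set P2 := iteratedDeriv 2 p l₀ with hP2
  set P4 := iteratedDeriv 4 p l₀ with hP4
  set m4 := ∫ u, u ^ 4 ∂F with hm4
  set b := τ ^ 2 * P2 with hbdef
  set c := τ ^ 4 * P4 * m4 with hcdef
  have hane : a ≠ 0 := ne_of_gt hpos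
  have hG00 : G 0 0 = a := by
    rw [hzero 0]; simp [hadef]
  have hG10 : G 1 0 = 0 := by rw [hzero 1]; simp [hU1]
  have hG20 : G 2 0 = b := by rw [hzero 2, hU2, hbdef, hP2]; ring
  have hG30 : G 3 0 = 0 := by rw [hzero 3]; simp [hU3]
  have hG40 : G 4 0 = c := by rw [hzero 4, hcdef, hP4, hm4]
  have h0eps : |(0:ℝ)| < ε := by simpa using hε
  have hG0cont : Tendsto (G 0) (𝓝 0) (𝓝 a) := by
    have h : Tendsto (G 0) (𝓝 0) (𝓝 (G 0 0)) := (hkey 0 (by norm_num) 0 h0eps).continuousAt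
    rwa [hG00] at h
  obtain ⟨δ₀, hδ₀pos, hδ₀G⟩ : ∃ δ₀ > 0, ∀ ξ : ℝ, dist ξ 0 < δ₀ → 0 < G 0 ξ := by
    have h := hG0cont (Ioi_mem_nhds hpos)
    rw [mem_map, Metric.mem_nhds_iff] at h
    obtain ⟨δ₀, hδ₀, hsub⟩ := h
    exact ⟨δ₀, hδ₀, fun ξ hξ => hsub (by simpa [Metric.mem_ball] using hξ)⟩
  set δ := min δ₀ ε with hδdef
  have hδpos : 0 < δ := lt_min hδ₀pos hε
  have hδε : δ ≤ ε := min_le_right _ _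
  have hδG : ∀ ξ : ℝ, |ξ| < δ → 0 < G 0 ξ := fun ξ hξ =>
    hδ₀G ξ (by simpa [Real.dist_eq] using lt_of_lt_of_le hξ (min_le_left _ _))
  have hIooE : ∀ x : ℝ, x ∈ Set.Ioo (0:ℝ) δ → |x| < ε := fun x hx => by
    rw [abs_of_pos hx.1]; exact lt_of_lt_of_le hx.2 hδε
  have hIooD : ∀ x : ℝ, x ∈ Set.Ioo (0:ℝ) δ → 0 < G 0 x := fun x hx =>
    hδG x (by rw [abs_of_pos hx.1]; exact hx.2)
  -- slope limits at 0
  have hs1 : Tendsto (fun ξ => G 1 ξ / ξ) (𝓝[>] 0) (𝓝 b) := by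
    have h := hkey 1 (by norm_num) 0 h0eps
    rw [hG20, hasDerivAt_iff_tendsto_slope] at h
    have h2 := h.mono_left
      (nhdsWithin_mono 0 fun x hx => Set.mem_compl_singleton_iff.mpr (ne_of_gt hx))
    refine h2.congr fun ξ => ?_
    simp [slope_def_field, hG10]
  have hs3 : Tendsto (fun ξ => G 3 ξ / ξ) (𝓝[>] 0) (𝓝 c) := by
    have h := hkey 3 (by norm_num) 0 h0eps
    rw [hG40, hasDerivAt_iff_tendsto_slope] at h
    have h2 := h.mono_left
      (nhdsWithin_mono 0 fun x hx => Set.mem_compl_singleton_iff.mpr (ne_of_gt hx))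
    refine h2.congr fun ξ => ?_
    simp [slope_def_field, hG30]
  have hG0w : Tendsto (G 0) (𝓝[>] 0) (𝓝 a) := hG0cont.mono_left nhdsWithin_le_nhds
  have hG2w : Tendsto (G 2) (𝓝[>] 0) (𝓝 b) := by
    have h : Tendsto (G 2) (𝓝 0) (𝓝 (G 2 0)) := (hkey 2 (by norm_num) 0 h0eps).continuousAt
    rw [hG20] at h
    exact h.mono_left nhdsWithin_le_nhds
  have T1 : Tendsto (fun ξ => (G 0 ξ - a) / ξ ^ 2) (𝓝[>] 0) (𝓝 (b / 2)) := by
    refine HasDerivAt.lhopital_zero_right_on_Ioo (a := 0) (b := δ) (f' := G 1)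
      (g' := fun ξ => 2 * ξ) hδpos
      (fun x hx => (hkey 0 (by norm_num) x (hIooE x hx)).sub_const a)
      (fun x hx => by simpa using hasDerivAt_pow 2 x)
      (fun x hx => by have := hx.1; positivity)
      (by simpa using hG0w.sub_const a)
      (by
        have h : Tendsto (fun ξ : ℝ => ξ ^ 2) (𝓝 0) (𝓝 ((0:ℝ) ^ 2)) :=
          (continuous_pow 2).tendsto 0
        simpa using h.mono_left nhdsWithin_le_nhds)
      (by
        refine (hs1.div_const 2).congr fun ξ => ?_
        rw [div_div, mul_comm])
  have Tinner : Tendsto (fun ξ => (G 2 ξ - b) / (3 * ξ ^ 2)) (𝓝[>] 0) (𝓝 (c / 6)) := by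
    refine HasDerivAt.lhopital_zero_right_on_Ioo (a := 0) (b := δ) (f' := G 3)
      (g' := fun ξ => 6 * ξ) hδpos
      (fun x hx => (hkey 2 (by norm_num) x (hIooE x hx)).sub_const b)
      (fun x hx => by
        have h := (hasDerivAt_pow 2 x).const_mul (3:ℝ)
        exact h.congr_deriv (by push_cast; ring))
      (fun x hx => by have := hx.1; positivity)
      (by simpa using hG2w.sub_const b)
      (by
        have h : Tendsto (fun ξ : ℝ => 3 * ξ ^ 2) (𝓝 0) (𝓝 (3 * (0:ℝ) ^ 2)) :=
          (continuous_const.mul (continuous_pow 2)).tendsto 0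
        simpa using h.mono_left nhdsWithin_le_nhds)
      (by
        refine (hs3.div_const 6).congr fun ξ => ?_
        rw [div_div, mul_comm])
  have T2 : Tendsto (fun ξ => (G 1 ξ - b * ξ) / ξ ^ 3) (𝓝[>] 0) (𝓝 (c / 6)) := by
    refine HasDerivAt.lhopital_zero_right_on_Ioo (a := 0) (b := δ)
      (f' := fun ξ => G 2 ξ - b) (g' := fun ξ => 3 * ξ ^ 2) hδpos
      (fun x hx => by
        have h1 := hkey 1 (by norm_num) x (hIooE x hx)
        have h2 : HasDerivAt (fun ξ : ℝ => b * ξ) b x := by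
          simpa using (hasDerivAt_id x).const_mul b
        exact h1.sub h2)
      (fun x hx => by
        have h := hasDerivAt_pow 3 x
        exact h.congr_deriv (by push_cast; ring))
      (fun x hx => by have := hx.1; positivity)
      (by
        have hG1w : Tendsto (G 1) (𝓝[>] 0) (𝓝 0) := by
          have h : Tendsto (G 1) (𝓝 0) (𝓝 (G 1 0)) :=
            (hkey 1 (by norm_num) 0 h0eps).continuousAt
          rw [hG10] at h
          exact h.mono_left nhdsWithin_le_nhds
        have hb : Tendsto (fun ξ : ℝ => b * ξ) (𝓝[>] 0) (𝓝 0) := by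
          have h : Tendsto (fun ξ : ℝ => b * ξ) (𝓝 0) (𝓝 (b * 0)) :=
            (continuous_const.mul continuous_id).tendsto 0
          simpa using h.mono_left nhdsWithin_le_nhds
        simpa using hG1w.sub hb)
      (by
        have h : Tendsto (fun ξ : ℝ => ξ ^ 3) (𝓝 0) (𝓝 ((0:ℝ) ^ 3)) :=
          (continuous_pow 3).tendsto 0
        simpa using h.mono_left nhdsWithin_le_nhds)
      Tinner
  have TΨ : Tendsto (fun ξ => (Real.log (G 0 ξ) - Real.log a) / ξ ^ 2) (𝓝[>] 0)
      (𝓝 (b / (2 * a))) := by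
    have hconst : Tendsto (fun ξ => (G 0 ξ)⁻¹) (𝓝[>] 0) (𝓝 a⁻¹) := hG0w.inv₀ hane
    have hdiv : Tendsto (fun x => (G 1 x / G 0 x) / (2 * x)) (𝓝[>] 0) (𝓝 (b / (2 * a))) := by
      have h := (hs1.mul hconst).div_const 2
      have heq : b * a⁻¹ / 2 = b / (2 * a) := by
        rw [div_eq_mul_inv b, mul_inv]; ring
      rw [heq] at h
      refine h.congr fun ξ => ?_
      simp only [div_eq_mul_inv, mul_inv]
      ring
    refine HasDerivAt.lhopital_zero_right_on_Ioo (a := 0) (b := δ)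
      (f' := fun ξ => G 1 ξ / G 0 ξ) (g' := fun ξ => 2 * ξ) hδpos
      (fun x hx => ((hkey 0 (by norm_num) x (hIooE x hx)).log
        (ne_of_gt (hIooD x hx))).sub_const (Real.log a))
      (fun x hx => by simpa using hasDerivAt_pow 2 x)
      (fun x hx => by have := hx.1; positivity)
      (by
        have hlog : Tendsto (fun ξ => Real.log (G 0 ξ)) (𝓝 0) (𝓝 (Real.log a)) :=
          (Real.continuousAt_log hane).tendsto.comp hG0cont
        simpa using (hlog.mono_left nhdsWithin_le_nhds).sub_const (Real.log a))
      (by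
        have h : Tendsto (fun ξ : ℝ => ξ ^ 2) (𝓝 0) (𝓝 ((0:ℝ) ^ 2)) :=
          (continuous_pow 2).tendsto 0
        simpa using h.mono_left nhdsWithin_le_nhds)
      hdiv
  set L := (a * (c / 6) - b * (b / 2)) * (2 * a * a)⁻¹ with hLdef
  have hinvlim : Tendsto (fun ξ => (2 * a * G 0 ξ)⁻¹) (𝓝[>] 0) (𝓝 ((2 * a * a)⁻¹)) := by
    refine Tendsto.inv₀ ?_ (by positivity)
    exact hG0w.const_mul (2 * a)
  have TN : Tendsto (fun ξ => (G 1 ξ / ξ / (2 * G 0 ξ) - b / (2 * a)) / ξ ^ 2)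
      (𝓝[>] 0) (𝓝 L) := by
    have hR : Tendsto (fun ξ => (a * ((G 1 ξ - b * ξ) / ξ ^ 3) - b * ((G 0 ξ - a) / ξ ^ 2))
        * (2 * a * G 0 ξ)⁻¹) (𝓝[>] 0) (𝓝 L) := by
      rw [hLdef]
      exact ((T2.const_mul a).sub (T1.const_mul b)).mul hinvlim
    have heq : (fun ξ => (a * ((G 1 ξ - b * ξ) / ξ ^ 3) - b * ((G 0 ξ - a) / ξ ^ 2))
        * (2 * a * G 0 ξ)⁻¹)
        =ᶠ[𝓝[>] (0:ℝ)] fun ξ => (G 1 ξ / ξ / (2 * G 0 ξ) - b / (2 * a)) / ξ ^ 2 := by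
      filter_upwards [Ioo_mem_nhdsGT_of_mem (Set.mem_Ico.mpr ⟨le_refl (0:ℝ), hδpos⟩)] with ξ hξ
      have hξ0 : ξ ≠ 0 := ne_of_gt hξ.1
      have hGξ : G 0 ξ ≠ 0 := ne_of_gt (hIooD ξ hξ)
      field_simp
      ring
    exact Tendsto.congr' heq hR
  have hsqrt_t : Tendsto Real.sqrt (𝓝[>] 0) (𝓝[>] 0) := by
    rw [tendsto_nhdsWithin_iff]
    constructor
    · have h := Real.continuous_sqrt.tendsto 0
      rw [Real.sqrt_zero] at h
      exact h.mono_left nhdsWithin_le_nhds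
    · exact eventually_mem_nhdsWithin.mono fun x hx => Real.sqrt_pos.mpr hx
  have hld0 : HasDerivWithinAt l (b / (2 * a)) (Set.Ici 0) 0 := by
    rw [hasDerivWithinAt_iff_tendsto_slope, Set.Ici_sdiff_left]
    have hcomp := TΨ.comp hsqrt_t
    have heq : ((fun ξ => (Real.log (G 0 ξ) - Real.log a) / ξ ^ 2) ∘ Real.sqrt)
        =ᶠ[𝓝[>] (0:ℝ)] slope l 0 := by
      filter_upwards [eventually_mem_nhdsWithin] with η hη
      have hη0 : (0:ℝ) ≤ η := le_of_lt hη
      have h1 : l η = Real.log (G 0 (Real.sqrt η)) := hleq η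
      have h2 : l 0 = Real.log a := by rw [hleq 0, Real.sqrt_zero, hG00]
      simp only [Function.comp_apply, slope_def_field, h1, h2, Real.sq_sqrt hη0, sub_zero]
    exact Tendsto.congr' heq hcomp
  have hf0 : derivWithin l (Set.Ici 0) 0 = b / (2 * a) :=
    hld0.derivWithin (uniqueDiffOn_Ici 0 0 Set.self_mem_Ici)
  have hδ2pos : 0 < δ ^ 2 := by positivity
  have hfη : ∀ η : ℝ, η ∈ Set.Ioo (0:ℝ) (δ ^ 2) → derivWithin l (Set.Ici 0) η
      = G 1 (Real.sqrt η) / Real.sqrt η / (2 * G 0 (Real.sqrt η)) := by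
    intro η hη
    have hη0 : 0 < η := hη.1
    have hsδ : Real.sqrt η < δ := (Real.sqrt_lt' hδpos).mpr hη.2
    have hs0 : 0 < Real.sqrt η := Real.sqrt_pos.mpr hη0
    have hsabs : |Real.sqrt η| < δ := by rw [abs_of_pos hs0]; exact hsδ
    have hsε : |Real.sqrt η| < ε := lt_of_lt_of_le hsabs hδε
    have hGpos : 0 < G 0 (Real.sqrt η) := hδG _ hsabs
    have hl' : l = fun η => Real.log (G 0 (Real.sqrt η)) := funext hleq
    have hsq : HasDerivAt Real.sqrt (1 / (2 * Real.sqrt η)) η :=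
      Real.hasDerivAt_sqrt (ne_of_gt hη0)
    have hcomp : HasDerivAt (fun x => G 0 (Real.sqrt x))
        (G 1 (Real.sqrt η) * (1 / (2 * Real.sqrt η))) η :=
      (hkey 0 (by norm_num) _ hsε).comp η hsq
    have hlog := hcomp.log (ne_of_gt hGpos)
    have hlw : HasDerivWithinAt l
        (G 1 (Real.sqrt η) * (1 / (2 * Real.sqrt η)) / G 0 (Real.sqrt η)) (Set.Ici 0) η := by
      rw [hl']; exact hlog.hasDerivWithinAt
    rw [hlw.derivWithin (uniqueDiffOn_Ici 0 η (Set.mem_Ici.mpr hη0.le))]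
    simp only [div_eq_mul_inv, mul_inv]
    ring
  have main : HasDerivWithinAt (fun η : ℝ => derivWithin l (Set.Ici 0) η) L (Set.Ici 0) 0 := by
    rw [hasDerivWithinAt_iff_tendsto_slope, Set.Ici_sdiff_left]
    have hcomp := TN.comp hsqrt_t
    have heq : ((fun ξ => (G 1 ξ / ξ / (2 * G 0 ξ) - b / (2 * a)) / ξ ^ 2) ∘ Real.sqrt)
        =ᶠ[𝓝[>] (0:ℝ)] slope (fun η : ℝ => derivWithin l (Set.Ici 0) η) 0 := by
      filter_upwards [Ioo_mem_nhdsGT_of_mem (Set.mem_Ico.mpr ⟨le_refl (0:ℝ), hδ2pos⟩)] with η hη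
      have hη0 : (0:ℝ) ≤ η := le_of_lt hη.1
      simp only [Function.comp_apply, slope_def_field, Real.sq_sqrt hη0, hfη η hη, hf0, sub_zero]
    exact Tendsto.congr' heq hcomp
  convert main using 1
  rw [hU2, hLdef, hbdef, hcdef]
  field_simp
  ring
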